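/- The standard face-centred icosahedral module M_F = {(β,γ,δ)ᵗ ∈ M_B : β + γ + δ ≡ 0 (mod 2)} equals {(β,γ,δ)ᵗ : β,γ,δ ∈ ℤ[τ], β ≡ τγ ≡ τ²δ (mod 2)}, and M_F is a subgroup of index 4 in M_B. -/

import Mathlib

noncomputable def τ : ℝ := (1 + Real.sqrt 5) / 2

/-- The ring `ℤ[τ]`, as a subset of `ℝ`. -/
def Ztau : Set ℝ := {x | ∃ a b : ℤ, x = (a : ℝ) + (b : ℝ) * τ}

/-- `x ≡ y (mod 2)` in `ℤ[τ]`. -/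
def ModTwo (x y : ℝ) : Prop := ∃ w ∈ Ztau, x - y = 2 * w

/-- The standard body-centred icosahedral module `M_B`. -/
def MB : Set (Fin 3 → ℝ) :=
  {v | (∀ i, v i ∈ Ztau) ∧ ModTwo (τ ^ 2 * v 0 + τ * v 1 + v 2) 0}

/-- The standard face-centred icosahedral module `M_F`, defined as the set of
elements of `M_B` whose coordinate sum is `≡ 0 (mod 2)`. -/
def MF : Set (Fin 3 → ℝ) := {v | v ∈ MB ∧ ModTwo (v 0 + v 1 + v 2) 0}

lemma tau_sq : τ ^ 2 = τ + 1 := by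
  have h : Real.sqrt 5 ^ 2 = 5 := Real.sq_sqrt (by norm_num)
  unfold τ; nlinarith [h]

lemma sqrt5_irr : Irrational (Real.sqrt 5) := by
  have h : Nat.Prime 5 := by norm_num
  simpa using h.irrational_sqrt

lemma coeff_eq_zero {a b : ℤ} (h : (a:ℝ) + (b:ℝ) * τ = 0) : a = 0 ∧ b = 0 := by
  by_cases hb : b = 0
  · subst hb
    simp at h
    exact ⟨by exact_mod_cast h, rfl⟩
  · exfalso
    have hb' : (b:ℝ) ≠ 0 := Int.cast_ne_zero.mpr hb
    have h5 : Real.sqrt 5 = (((-2*a-b : ℤ) : ℚ)/((b:ℤ):ℚ) : ℚ) := by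
      push_cast
      rw [eq_div_iff hb']
      unfold τ at h
      nlinarith [h]
    exact sqrt5_irr ⟨_, h5.symm⟩

lemma modTwo_iff (a b c d : ℤ) :
    ModTwo ((a:ℝ) + (b:ℝ) * τ) ((c:ℝ) + (d:ℝ) * τ) ↔ (2 ∣ (a - c) ∧ 2 ∣ (b - d)) := by
  constructor
  · rintro ⟨w, ⟨p, q, rfl⟩, hw⟩
    have h0 : ((a - c - 2*p : ℤ):ℝ) + ((b - d - 2*q : ℤ):ℝ) * τ = 0 := by
      push_cast
      linear_combination hw
    obtain ⟨h1, h2⟩ := coeff_eq_zero h0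
    exact ⟨⟨p, by omega⟩, ⟨q, by omega⟩⟩
  · rintro ⟨⟨p, hp⟩, ⟨q, hq⟩⟩
    refine ⟨(p:ℝ) + (q:ℝ)*τ, ⟨p, q, rfl⟩, ?_⟩
    have hp' : (a:ℝ) - c = 2*p := by exact_mod_cast hp
    have hq' : (b:ℝ) - d = 2*q := by exact_mod_cast hq
    linear_combination hp' + τ * hq'

lemma modTwo_zero_iff (a b : ℤ) :
    ModTwo ((a:ℝ) + (b:ℝ) * τ) 0 ↔ (2 ∣ a ∧ 2 ∣ b) := by
  have h := modTwo_iff a b 0 0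
  simpa using h

lemma expandB (b0 b1 c0 c1 d0 d1 : ℤ) :
    τ^2*((b0:ℝ)+(b1:ℝ)*τ) + τ*((c0:ℝ)+(c1:ℝ)*τ) + ((d0:ℝ)+(d1:ℝ)*τ)
      = ((b0+b1+c1+d0 : ℤ):ℝ) + ((b0+2*b1+c0+c1+d1 : ℤ):ℝ)*τ := by
  push_cast
  linear_combination ((b1:ℝ)*τ + b0+b1+c1) * tau_sq

lemma expandTG (c0 c1 : ℤ) :
    τ*((c0:ℝ)+(c1:ℝ)*τ) = ((c1:ℤ):ℝ) + (((c0+c1:ℤ)):ℝ)*τ := by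
  push_cast
  linear_combination (c1:ℝ) * tau_sq

lemma expandT2D (d0 d1 : ℤ) :
    τ^2*((d0:ℝ)+(d1:ℝ)*τ) = ((d0+d1:ℤ):ℝ) + ((d0+2*d1:ℤ):ℝ)*τ := by
  push_cast
  linear_combination ((d1:ℝ)*τ + d0+d1) * tau_sq

lemma expandSum (b0 b1 c0 c1 d0 d1 : ℤ) :
    ((b0:ℝ)+(b1:ℝ)*τ) + ((c0:ℝ)+(c1:ℝ)*τ) + ((d0:ℝ)+(d1:ℝ)*τ)
      = ((b0+c0+d0 : ℤ):ℝ) + ((b1+c1+d1 : ℤ):ℝ)*τ := by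
  push_cast; ring

lemma mem_MB_iff' (b0 b1 c0 c1 d0 d1 : ℤ) (v : Fin 3 → ℝ)
    (h0 : v 0 = (b0:ℝ) + (b1:ℝ)*τ) (h1 : v 1 = (c0:ℝ)+(c1:ℝ)*τ)
    (h2 : v 2 = (d0:ℝ)+(d1:ℝ)*τ) :
    v ∈ MB ↔ (2 ∣ (b0+b1+c1+d0) ∧ 2 ∣ (b0+c0+c1+d1)) := by
  constructor
  · rintro ⟨-, hmod⟩
    rw [h0, h1, h2, expandB, modTwo_zero_iff] at hmod
    omega
  · intro h
    refine ⟨fun i => ?_, ?_⟩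
    · fin_cases i
      exacts [⟨b0, b1, h0⟩, ⟨c0, c1, h1⟩, ⟨d0, d1, h2⟩]
    · rw [h0, h1, h2, expandB, modTwo_zero_iff]
      omega

lemma mem_MF_iff' (b0 b1 c0 c1 d0 d1 : ℤ) (v : Fin 3 → ℝ)
    (h0 : v 0 = (b0:ℝ) + (b1:ℝ)*τ) (h1 : v 1 = (c0:ℝ)+(c1:ℝ)*τ)
    (h2 : v 2 = (d0:ℝ)+(d1:ℝ)*τ) :
    v ∈ MF ↔ (2 ∣ (b0+b1+c1+d0) ∧ 2 ∣ (b0+c0+c1+d1) ∧ 2 ∣ (b0+c0+d0) ∧ 2 ∣ (b1+c1+d1)) := by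
  unfold MF
  rw [Set.mem_setOf_eq, mem_MB_iff' b0 b1 c0 c1 d0 d1 v h0 h1 h2, h0, h1, h2,
    expandSum, modTwo_zero_iff]
  tauto

/-- The four coset representatives. -/
noncomputable def rr : Fin 4 → Fin 3 → ℝ := fun i _ => ![0, 1, τ, 1 + τ] i

lemma rr0 : ∀ j : Fin 3, rr 0 j = (((0:ℤ)):ℝ) + (((0:ℤ)):ℝ) * τ := by
  intro j; norm_num [rr]

lemma rr1 : ∀ j : Fin 3, rr 1 j = (((1:ℤ)):ℝ) + (((0:ℤ)):ℝ) * τ := by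
  intro j; norm_num [rr]

lemma rr2 : ∀ j : Fin 3, rr 2 j = (((0:ℤ)):ℝ) + (((1:ℤ)):ℝ) * τ := by
  intro j; norm_num [rr]; rfl

lemma rr3 : ∀ j : Fin 3, rr 3 j = (((1:ℤ)):ℝ) + (((1:ℤ)):ℝ) * τ := by
  intro j; norm_num [rr]; rfl

/-- `M_F` equals `{(β,γ,δ) : β,γ,δ ∈ ℤ[τ], β ≡ τγ ≡ τ²δ (mod 2)}`, and `M_F`
is a subgroup of index `4` in `M_B` (witnessed by four coset representatives). -/
theorem MF_characterization_and_index_four :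
    MF = {v | (∀ i, v i ∈ Ztau) ∧ ModTwo (v 0) (τ * v 1) ∧ ModTwo (τ * v 1) (τ ^ 2 * v 2)} ∧
    (∀ v ∈ MF, v ∈ MB) ∧
    (∀ v w, v ∈ MF → w ∈ MF → v - w ∈ MF) ∧
    ∃ r : Fin 4 → (Fin 3 → ℝ), (∀ i, r i ∈ MB) ∧
      ∀ v ∈ MB, ∃! i : Fin 4, v - r i ∈ MF := by
  refine ⟨?_, fun v hv => hv.1, ?_, ?_⟩
  · ext v
    simp only [Set.mem_setOf_eq]
    constructor
    · intro hv
      obtain ⟨b0, b1, h0⟩ := hv.1.1 0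
      obtain ⟨c0, c1, h1⟩ := hv.1.1 1
      obtain ⟨d0, d1, h2⟩ := hv.1.1 2
      obtain ⟨e1, e2, e3, e4⟩ := (mem_MF_iff' b0 b1 c0 c1 d0 d1 v h0 h1 h2).mp hv
      refine ⟨hv.1.1, ?_, ?_⟩
      · rw [h0, h1, expandTG, modTwo_iff]; omega
      · rw [h1, h2, expandTG, expandT2D, modTwo_iff]; omega
    · intro hv
      obtain ⟨b0, b1, h0⟩ := hv.1 0
      obtain ⟨c0, c1, h1⟩ := hv.1 1
      obtain ⟨d0, d1, h2⟩ := hv.1 2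
      have hA := hv.2.1
      have hC := hv.2.2
      rw [h0, h1, expandTG, modTwo_iff] at hA
      rw [h1, h2, expandTG, expandT2D, modTwo_iff] at hC
      exact (mem_MF_iff' b0 b1 c0 c1 d0 d1 v h0 h1 h2).mpr (by omega)
  · intro v w hv hw
    obtain ⟨b0, b1, h0⟩ := hv.1.1 0
    obtain ⟨c0, c1, h1⟩ := hv.1.1 1
    obtain ⟨d0, d1, h2⟩ := hv.1.1 2
    obtain ⟨e0, e1, g0⟩ := hw.1.1 0
    obtain ⟨f0, f1, g1⟩ := hw.1.1 1
    obtain ⟨k0, k1, g2⟩ := hw.1.1 2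
    have hv' := (mem_MF_iff' b0 b1 c0 c1 d0 d1 v h0 h1 h2).mp hv
    have hw' := (mem_MF_iff' e0 e1 f0 f1 k0 k1 w g0 g1 g2).mp hw
    refine (mem_MF_iff' (b0-e0) (b1-e1) (c0-f0) (c1-f1) (d0-k0) (d1-k1) (v-w)
      ?_ ?_ ?_).mpr (by omega)
    · rw [Pi.sub_apply, h0, g0]; push_cast; ring
    · rw [Pi.sub_apply, h1, g1]; push_cast; ring
    · rw [Pi.sub_apply, h2, g2]; push_cast; ring
  · refine ⟨rr, ?_, ?_⟩
    · intro i
      fin_cases i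
      · exact (mem_MB_iff' 0 0 0 0 0 0 _ (rr0 0) (rr0 1) (rr0 2)).mpr (by omega)
      · exact (mem_MB_iff' 1 0 1 0 1 0 _ (rr1 0) (rr1 1) (rr1 2)).mpr (by omega)
      · exact (mem_MB_iff' 0 1 0 1 0 1 _ (rr2 0) (rr2 1) (rr2 2)).mpr (by omega)
      · exact (mem_MB_iff' 1 1 1 1 1 1 _ (rr3 0) (rr3 1) (rr3 2)).mpr (by omega)
    · intro v hv
      obtain ⟨b0, b1, h0⟩ := hv.1 0
      obtain ⟨c0, c1, h1⟩ := hv.1 1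
      obtain ⟨d0, d1, h2⟩ := hv.1 2
      obtain ⟨hE1, hE2⟩ := (mem_MB_iff' b0 b1 c0 c1 d0 d1 v h0 h1 h2).mp hv
      have m0 := mem_MF_iff' b0 b1 c0 c1 d0 d1 (v - rr 0)
        (by rw [Pi.sub_apply, h0, rr0 0]; push_cast; ring)
        (by rw [Pi.sub_apply, h1, rr0 1]; push_cast; ring)
        (by rw [Pi.sub_apply, h2, rr0 2]; push_cast; ring)
      have m1 := mem_MF_iff' (b0-1) b1 (c0-1) c1 (d0-1) d1 (v - rr 1)
        (by rw [Pi.sub_apply, h0, rr1 0]; push_cast; ring)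
        (by rw [Pi.sub_apply, h1, rr1 1]; push_cast; ring)
        (by rw [Pi.sub_apply, h2, rr1 2]; push_cast; ring)
      have m2 := mem_MF_iff' b0 (b1-1) c0 (c1-1) d0 (d1-1) (v - rr 2)
        (by rw [Pi.sub_apply, h0, rr2 0]; push_cast; ring)
        (by rw [Pi.sub_apply, h1, rr2 1]; push_cast; ring)
        (by rw [Pi.sub_apply, h2, rr2 2]; push_cast; ring)
      have m3 := mem_MF_iff' (b0-1) (b1-1) (c0-1) (c1-1) (d0-1) (d1-1) (v - rr 3)
        (by rw [Pi.sub_apply, h0, rr3 0]; push_cast; ring)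
        (by rw [Pi.sub_apply, h1, rr3 1]; push_cast; ring)
        (by rw [Pi.sub_apply, h2, rr3 2]; push_cast; ring)
      by_cases h3 : 2 ∣ (b0+c0+d0) <;> by_cases h4 : 2 ∣ (b1+c1+d1)
      · refine ⟨0, m0.mpr (by omega), ?_⟩
        intro j hj
        fin_cases j
        · rfl
        · exact absurd (m1.mp hj) (by omega)
        · exact absurd (m2.mp hj) (by omega)
        · exact absurd (m3.mp hj) (by omega)
      · refine ⟨2, m2.mpr (by omega), ?_⟩
        intro j hj
        fin_cases j
        · exact absurd (m0.mp hj) (by omega)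
        · exact absurd (m1.mp hj) (by omega)
        · rfl
        · exact absurd (m3.mp hj) (by omega)
      · refine ⟨1, m1.mpr (by omega), ?_⟩
        intro j hj
        fin_cases j
        · exact absurd (m0.mp hj) (by omega)
        · rfl
        · exact absurd (m2.mp hj) (by omega)
        · exact absurd (m3.mp hj) (by omega)
      · refine ⟨3, m3.mpr (by omega), ?_⟩
        intro j hj
        fin_cases j
        · exact absurd (m0.mp hj) (by omega)
        · exact absurd (m1.mp hj) (by omega)
        · exact absurd (m2.mp hj) (by omega)
        · rfl
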